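/- arXiv:1610.03025 — 2 statements merged into one kernel-verified Lean document; each statement's English description precedes it below -/
import Mathlib

section
/- Suppose (U^n) and (V^n) both solve the implicit upwind scheme (with the same f⁺, f⁻, δ). Fix n ∈ ℕ and assume that for each 0 ≤ k ≤ n+1 the sequence j ↦ |U^k_j − V^k_j| is summable over ℤ, and that the sequences j ↦ |f⁺(U^{n+1}_j) − f⁺(V^{n+1}_j)| and j ↦ |f⁻(U^{n+1}_j) − f⁻(V^{n+1}_j)| are summable over ℤ. Then, with no restriction on δ, Σ_{j∈ℤ} |U^{n+1}_j − V^{n+1}_j| ≤ Σ_{k=0}^{n} c^{n+1}_k Σ_{j∈ℤ} |U^k_j − V^k_j|. -/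
open scoped BigOperators

/-- The L1 coefficients `c^{n+1}_k` for the discrete Caputo derivative:
`c^{n+1}_0 = (n+1)^{1-α} - n^{1-α}` and, for `1 ≤ k ≤ n`,
`c^{n+1}_k = 2(n+1-k)^{1-α} - (n+2-k)^{1-α} - (n-k)^{1-α}`. -/
noncomputable def caputoCoeff (α : ℝ) (n k : ℕ) : ℝ :=
  if k = 0 then ((n : ℝ) + 1) ^ (1 - α) - (n : ℝ) ^ (1 - α)
  else 2 * ((n : ℝ) + 1 - (k : ℝ)) ^ (1 - α) - ((n : ℝ) + 2 - (k : ℝ)) ^ (1 - α)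
    - ((n : ℝ) - (k : ℝ)) ^ (1 - α)

/-- `U` solves the implicit upwind scheme with time steps indexed by `ℕ`
and space indexed by `ℤ`. -/
def SolvesImplicitScheme (α δ : ℝ) (fp fm : ℝ → ℝ) (U : ℕ → ℤ → ℝ) : Prop :=
  ∀ (n : ℕ) (j : ℤ),
    U (n + 1) j = (∑ k ∈ Finset.range (n + 1), caputoCoeff α n k * U k j)
      - δ * (fp (U (n + 1) j) - fp (U (n + 1) (j - 1)))
      - δ * (fm (U (n + 1) (j + 1)) - fm (U (n + 1) j))

lemma caputoCoeff_nonneg {α : ℝ} (hα : α ∈ Set.Ioo (0:ℝ) 1) (n k : ℕ) (hk : k ≤ n) :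
    0 ≤ caputoCoeff α n k := by
  obtain ⟨hα0, hα1⟩ := hα
  have hp0 : (0:ℝ) ≤ 1 - α := by linarith
  rw [caputoCoeff]
  split_ifs with h
  · have := Real.rpow_le_rpow (by positivity : (0:ℝ) ≤ (n:ℝ))
      (by linarith : (n:ℝ) ≤ (n:ℝ) + 1) hp0
    linarith
  · have hkn : (k:ℝ) ≤ n := by exact_mod_cast hk
    have hconc := Real.concaveOn_rpow hp0 (by linarith : 1 - α ≤ 1)
    have hx : ((n:ℝ) - k) ∈ Set.Ici (0:ℝ) := by simp; linarith
    have hy : ((n:ℝ) + 2 - k) ∈ Set.Ici (0:ℝ) := by simp; linarith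
    have := hconc.2 hx hy (by norm_num : (0:ℝ) ≤ 1/2) (by norm_num : (0:ℝ) ≤ 1/2)
      (by norm_num)
    simp only [smul_eq_mul] at this
    have hmid : (1/2 : ℝ) * ((n:ℝ) - k) + (1/2 : ℝ) * ((n:ℝ) + 2 - k) = (n:ℝ) + 1 - k := by
      ring
    rw [hmid] at this
    linarith

set_option maxHeartbeats 1000000 in
/-- one-step `ℓ¹` estimate for the implicit upwind scheme, with no
restriction on `δ`:
`Σ_j |U^{n+1}_j - V^{n+1}_j| ≤ Σ_{k=0}^n c^{n+1}_k Σ_j |U^k_j - V^k_j|`. -/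
theorem implicit_upwind_l1_step (α τ h : ℝ) (hα : α ∈ Set.Ioo (0 : ℝ) 1)
    (hτ : 0 < τ) (hh : 0 < h) (δ : ℝ) (hδ : δ = τ ^ α / (h * Real.Gamma (2 - α)))
    (fp fm : ℝ → ℝ) (hfp : Differentiable ℝ fp) (hfm : Differentiable ℝ fm)
    (hfp' : ∀ x, 0 ≤ deriv fp x) (hfm' : ∀ x, deriv fm x ≤ 0)
    (U V : ℕ → ℤ → ℝ)
    (hU : SolvesImplicitScheme α δ fp fm U) (hV : SolvesImplicitScheme α δ fp fm V)
    (n : ℕ) (hsum : ∀ k ≤ n + 1, Summable (fun j : ℤ => |U k j - V k j|))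
    (hfpsum : Summable (fun j : ℤ => |fp (U (n + 1) j) - fp (V (n + 1) j)|))
    (hfmsum : Summable (fun j : ℤ => |fm (U (n + 1) j) - fm (V (n + 1) j)|)) :
    ∑' j : ℤ, |U (n + 1) j - V (n + 1) j|
      ≤ ∑ k ∈ Finset.range (n + 1), caputoCoeff α n k * ∑' j : ℤ, |U k j - V k j| := by
  have hδ0 : 0 ≤ δ := by
    have hg : 0 < Real.Gamma (2 - α) := Real.Gamma_pos_of_pos (by linarith [hα.2])
    rw [hδ]
    exact div_nonneg (Real.rpow_nonneg hτ.le α) (mul_pos hh hg).le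
  have hmono : Monotone fp := monotone_of_deriv_nonneg hfp hfp'
  have hanti : Antitone fm := antitone_of_deriv_nonpos hfm hfm'
  -- the difference equation
  have heq : ∀ j : ℤ, U (n+1) j - V (n+1) j
      = (∑ k ∈ Finset.range (n + 1), caputoCoeff α n k * (U k j - V k j))
        - δ * (fp (U (n + 1) j) - fp (V (n + 1) j))
        + δ * (fp (U (n + 1) (j - 1)) - fp (V (n + 1) (j - 1)))
        - δ * (fm (U (n + 1) (j + 1)) - fm (V (n + 1) (j + 1)))
        + δ * (fm (U (n + 1) j) - fm (V (n + 1) j)) := by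
    intro j
    have h1 := hU n j
    have h2 := hV n j
    have hs : ∑ k ∈ Finset.range (n + 1), caputoCoeff α n k * (U k j - V k j)
        = (∑ k ∈ Finset.range (n + 1), caputoCoeff α n k * U k j)
          - (∑ k ∈ Finset.range (n + 1), caputoCoeff α n k * V k j) := by
      rw [← Finset.sum_sub_distrib]
      exact Finset.sum_congr rfl fun k _ => by ring
    linear_combination h1 - h2 - hs
  -- the pointwise bound for the sum term
  have hS : ∀ j : ℤ, |∑ k ∈ Finset.range (n + 1), caputoCoeff α n k * (U k j - V k j)|
      ≤ ∑ k ∈ Finset.range (n + 1), caputoCoeff α n k * |U k j - V k j| := by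
    intro j
    refine (Finset.abs_sum_le_sum_abs _ _).trans (Finset.sum_le_sum fun k hk => ?_)
    rw [abs_mul, abs_of_nonneg (caputoCoeff_nonneg hα n k (by
      have := Finset.mem_range.mp hk; omega))]
  -- the key pointwise estimate
  have key : ∀ j : ℤ, |U (n + 1) j - V (n + 1) j|
      ≤ (∑ k ∈ Finset.range (n + 1), caputoCoeff α n k * |U k j - V k j|)
        + (δ * |fp (U (n + 1) (j - 1)) - fp (V (n + 1) (j - 1))|
            - δ * |fp (U (n + 1) j) - fp (V (n + 1) j)|)
        + (δ * |fm (U (n + 1) (j + 1)) - fm (V (n + 1) (j + 1))|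
            - δ * |fm (U (n + 1) j) - fm (V (n + 1) j)|) := by
    intro j
    have hb1 : δ * (fp (U (n + 1) (j - 1)) - fp (V (n + 1) (j - 1)))
        ≤ δ * |fp (U (n + 1) (j - 1)) - fp (V (n + 1) (j - 1))| :=
      mul_le_mul_of_nonneg_left (le_abs_self _) hδ0
    have hb1' : -(δ * |fp (U (n + 1) (j - 1)) - fp (V (n + 1) (j - 1))|)
        ≤ δ * (fp (U (n + 1) (j - 1)) - fp (V (n + 1) (j - 1))) := by
      have := mul_le_mul_of_nonneg_left
        (neg_abs_le (fp (U (n + 1) (j - 1)) - fp (V (n + 1) (j - 1)))) hδ0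
      rwa [mul_neg] at this
    have hb2 : δ * (fm (U (n + 1) (j + 1)) - fm (V (n + 1) (j + 1)))
        ≤ δ * |fm (U (n + 1) (j + 1)) - fm (V (n + 1) (j + 1))| :=
      mul_le_mul_of_nonneg_left (le_abs_self _) hδ0
    have hb2' : -(δ * |fm (U (n + 1) (j + 1)) - fm (V (n + 1) (j + 1))|)
        ≤ δ * (fm (U (n + 1) (j + 1)) - fm (V (n + 1) (j + 1))) := by
      have := mul_le_mul_of_nonneg_left
        (neg_abs_le (fm (U (n + 1) (j + 1)) - fm (V (n + 1) (j + 1)))) hδ0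
      rwa [mul_neg] at this
    have hSle := (abs_le.mp (hS j)).2
    have hSge := (abs_le.mp (hS j)).1
    have heqj := heq j
    rcases le_total (V (n + 1) j) (U (n + 1) j) with hc | hc
    · have hFp : 0 ≤ fp (U (n + 1) j) - fp (V (n + 1) j) := sub_nonneg.mpr (hmono hc)
      have hFm : fm (U (n + 1) j) - fm (V (n + 1) j) ≤ 0 := sub_nonpos.mpr (hanti hc)
      rw [abs_of_nonneg (sub_nonneg.mpr hc), abs_of_nonneg hFp, abs_of_nonpos hFm]
      linarith
    · have hFp : fp (U (n + 1) j) - fp (V (n + 1) j) ≤ 0 := sub_nonpos.mpr (hmono hc)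
      have hFm : 0 ≤ fm (U (n + 1) j) - fm (V (n + 1) j) := sub_nonneg.mpr (hanti hc)
      rw [abs_of_nonpos (sub_nonpos.mpr hc), abs_of_nonpos hFp, abs_of_nonneg hFm]
      linarith
  -- summability
  have hFpShift : Summable (fun j : ℤ => |fp (U (n + 1) (j - 1)) - fp (V (n + 1) (j - 1))|) :=
    (Equiv.subRight (1 : ℤ)).summable_iff.mpr hfpsum
  have hFmShift : Summable (fun j : ℤ => |fm (U (n + 1) (j + 1)) - fm (V (n + 1) (j + 1))|) :=
    (Equiv.addRight (1 : ℤ)).summable_iff.mpr hfmsum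
  have hSsum : Summable (fun j : ℤ =>
      ∑ k ∈ Finset.range (n + 1), caputoCoeff α n k * |U k j - V k j|) :=
    summable_sum fun k hk =>
      ((hsum k (by have := Finset.mem_range.mp hk; omega)).mul_left _)
  have hA : Summable (fun j : ℤ =>
      (∑ k ∈ Finset.range (n + 1), caputoCoeff α n k * |U k j - V k j|)
        + (δ * |fp (U (n + 1) (j - 1)) - fp (V (n + 1) (j - 1))|
            - δ * |fp (U (n + 1) j) - fp (V (n + 1) j)|)
        + (δ * |fm (U (n + 1) (j + 1)) - fm (V (n + 1) (j + 1))|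
            - δ * |fm (U (n + 1) j) - fm (V (n + 1) j)|)) :=
    ((hSsum.add ((hFpShift.mul_left δ).sub (hfpsum.mul_left δ)))).add
      ((hFmShift.mul_left δ).sub (hfmsum.mul_left δ))
  have hshift1 : ∑' j : ℤ, δ * |fp (U (n + 1) (j - 1)) - fp (V (n + 1) (j - 1))|
      = ∑' j : ℤ, δ * |fp (U (n + 1) j) - fp (V (n + 1) j)| :=
    (Equiv.subRight (1 : ℤ)).tsum_eq (fun j => δ * |fp (U (n + 1) j) - fp (V (n + 1) j)|)
  have hshift2 : ∑' j : ℤ, δ * |fm (U (n + 1) (j + 1)) - fm (V (n + 1) (j + 1))|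
      = ∑' j : ℤ, δ * |fm (U (n + 1) j) - fm (V (n + 1) j)| :=
    (Equiv.addRight (1 : ℤ)).tsum_eq (fun j => δ * |fm (U (n + 1) j) - fm (V (n + 1) j)|)
  calc ∑' j : ℤ, |U (n + 1) j - V (n + 1) j|
      ≤ ∑' j : ℤ,
        ((∑ k ∈ Finset.range (n + 1), caputoCoeff α n k * |U k j - V k j|)
          + (δ * |fp (U (n + 1) (j - 1)) - fp (V (n + 1) (j - 1))|
              - δ * |fp (U (n + 1) j) - fp (V (n + 1) j)|)
          + (δ * |fm (U (n + 1) (j + 1)) - fm (V (n + 1) (j + 1))|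
              - δ * |fm (U (n + 1) j) - fm (V (n + 1) j)|)) :=
        Summable.tsum_le_tsum key (hsum (n + 1) le_rfl) hA
    _ = (∑' j : ℤ, ∑ k ∈ Finset.range (n + 1), caputoCoeff α n k * |U k j - V k j|)
          + ((∑' j : ℤ, δ * |fp (U (n + 1) (j - 1)) - fp (V (n + 1) (j - 1))|)
              - ∑' j : ℤ, δ * |fp (U (n + 1) j) - fp (V (n + 1) j)|)
          + ((∑' j : ℤ, δ * |fm (U (n + 1) (j + 1)) - fm (V (n + 1) (j + 1))|)
              - ∑' j : ℤ, δ * |fm (U (n + 1) j) - fm (V (n + 1) j)|) := by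
        rw [Summable.tsum_add (hSsum.add ((hFpShift.mul_left δ).sub (hfpsum.mul_left δ)))
          ((hFmShift.mul_left δ).sub (hfmsum.mul_left δ)),
          Summable.tsum_add hSsum ((hFpShift.mul_left δ).sub (hfpsum.mul_left δ)),
          Summable.tsum_sub (hFpShift.mul_left δ) (hfpsum.mul_left δ),
          Summable.tsum_sub (hFmShift.mul_left δ) (hfmsum.mul_left δ)]
    _ = ∑' j : ℤ, ∑ k ∈ Finset.range (n + 1), caputoCoeff α n k * |U k j - V k j| := by
        rw [hshift1, hshift2]; ring
    _ = ∑ k ∈ Finset.range (n + 1), caputoCoeff α n k * ∑' j : ℤ, |U k j - V k j| := by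
        rw [Summable.tsum_finsetSum (fun k hk =>
          ((hsum k (by have := Finset.mem_range.mp hk; omega)).mul_left _))]
        exact Finset.sum_congr rfl fun k _ => tsum_mul_left
end

section
/- Suppose (U^n) solves the implicit upwind scheme for linear advection with λ > 0, and let η : ℝ → ℝ be convex. Then for every n ∈ ℕ and j ∈ ℤ the pointwise entropy inequality holds: η(U^{n+1}_j) ≤ Σ_{k=0}^{n} (c^{n+1}_k/(1+λ)) η(U^k_j) + (λ/(1+λ)) η(U^{n+1}_{j−1}). (The inequality is Jensen's inequality applied to the convex-combination form U^{n+1}_j = Σ_{k=0}^{n} (c^{n+1}_k/(1+λ)) U^k_j + (λ/(1+λ)) U^{n+1}_{j−1}, whose weights are positive and sum to 1.) -/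
open scoped BigOperators

/-- `U` solves the implicit upwind scheme for the linear advection equation
with flux `f(u) = a u`, `a > 0`, where `lam = a τ^α / (h Γ(2-α))`. -/
def SolvesImplicitAdvection (α lam : ℝ) (U : ℕ → ℤ → ℝ) : Prop :=
  ∀ (n : ℕ) (j : ℤ),
    U (n + 1) j = (∑ k ∈ Finset.range (n + 1), caputoCoeff α n k * U k j)
      - lam * (U (n + 1) j - U (n + 1) (j - 1))

lemma caputoCoeff_pos {α : ℝ} (hα : α ∈ Set.Ioo (0 : ℝ) 1) {n k : ℕ} (hk : k ≤ n) :
    0 < caputoCoeff α n k := by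
  obtain ⟨hα0, hα1⟩ := hα
  have hp0 : (0 : ℝ) < 1 - α := by linarith
  have hp1 : 1 - α < 1 := by linarith
  rcases Nat.eq_zero_or_pos k with rfl | hk1
  · have he : caputoCoeff α n 0 = ((n : ℝ) + 1) ^ (1 - α) - (n : ℝ) ^ (1 - α) := by
      simp [caputoCoeff]
    rw [he]
    have := Real.rpow_lt_rpow (by positivity : (0:ℝ) ≤ (n:ℝ))
      (by linarith : (n:ℝ) < (n:ℝ) + 1) hp0
    linarith
  · have hne : k ≠ 0 := hk1.ne'
    simp only [caputoCoeff, if_neg hne]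
    set x : ℝ := (n : ℝ) - (k : ℝ) with hx
    have hx0 : 0 ≤ x := by
      have : (k : ℝ) ≤ (n : ℝ) := by exact_mod_cast hk
      linarith
    have hsc := Real.strictConcaveOn_rpow hp0 hp1
    have key := hsc.2 (Set.mem_Ici.2 hx0) (Set.mem_Ici.2 (by linarith : (0:ℝ) ≤ x + 2))
      (by linarith : x ≠ x + 2) (by norm_num : (0:ℝ) < 1/2) (by norm_num : (0:ℝ) < 1/2)
      (by norm_num)
    have hmid : (1/2 : ℝ) • x + (1/2 : ℝ) • (x + 2) = x + 1 := by
      simp only [smul_eq_mul]; ring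
    rw [hmid] at key
    simp only [smul_eq_mul] at key
    have h1 : (n : ℝ) + 1 - (k : ℝ) = x + 1 := by rw [hx]; ring
    have h2 : (n : ℝ) + 2 - (k : ℝ) = x + 2 := by rw [hx]; ring
    rw [h1, h2]
    linarith

lemma caputoCoeff_sum {α : ℝ} (hα : α ∈ Set.Ioo (0 : ℝ) 1) (n : ℕ) :
    ∑ k ∈ Finset.range (n + 1), caputoCoeff α n k = 1 := by
  obtain ⟨hα0, hα1⟩ := hα
  have hp0 : (0 : ℝ) < 1 - α := by linarith
  set b : ℕ → ℝ := fun k => ((n : ℝ) + 1 - (k : ℝ)) ^ (1 - α) - ((n : ℝ) - (k : ℝ)) ^ (1 - α)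
    with hb
  have hstep : ∀ k, caputoCoeff α n (k + 1) = b (k + 1) - b k := by
    intro k
    simp only [caputoCoeff, if_neg (Nat.succ_ne_zero k), hb]
    push_cast
    have e1 : (n : ℝ) + 1 - ((k : ℝ) + 1) = (n : ℝ) - (k : ℝ) := by ring
    have e2 : (n : ℝ) + 2 - ((k : ℝ) + 1) = (n : ℝ) + 1 - (k : ℝ) := by ring
    rw [e1, e2]
    ring
  rw [Finset.sum_range_succ']
  simp only [hstep]
  rw [Finset.sum_range_sub b n]
  have hn : ((n : ℝ) - (n : ℝ)) = 0 := by ring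
  have h0 : ((0:ℝ) : ℝ) ^ (1 - α) = 0 := Real.zero_rpow hp0.ne'
  have h1 : ((n : ℝ) + 1 - (n : ℝ)) = 1 := by ring
  have he0 : caputoCoeff α n 0 = ((n : ℝ) + 1) ^ (1 - α) - (n : ℝ) ^ (1 - α) := by
    simp [caputoCoeff]
  have hbn : b n = 1 := by
    have hbe : b n = ((n : ℝ) + 1 - (n : ℝ)) ^ (1 - α) - ((n : ℝ) - (n : ℝ)) ^ (1 - α) := rfl
    rw [hbe, h1, hn, Real.one_rpow, h0]
    ring
  have hb0 : b 0 = ((n : ℝ) + 1) ^ (1 - α) - (n : ℝ) ^ (1 - α) := by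
    have hbe : b 0 = ((n : ℝ) + 1 - ((0 : ℕ) : ℝ)) ^ (1 - α)
        - ((n : ℝ) - ((0 : ℕ) : ℝ)) ^ (1 - α) := rfl
    rw [hbe]
    norm_num
  rw [hbn, hb0, he0]
  ring

/-- pointwise entropy inequality (Jensen) for the implicit upwind scheme
for linear advection: for convex `η`,
`η(U^{n+1}_j) ≤ Σ_{k=0}^n (c^{n+1}_k/(1+λ)) η(U^k_j) + (λ/(1+λ)) η(U^{n+1}_{j-1})`. -/
theorem implicit_advection_pointwise_entropy (α τ h a : ℝ)
    (hα : α ∈ Set.Ioo (0 : ℝ) 1) (hτ : 0 < τ) (hh : 0 < h) (ha : 0 < a)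
    (lam : ℝ) (hlam : lam = a * τ ^ α / (h * Real.Gamma (2 - α)))
    (U : ℕ → ℤ → ℝ) (hU : SolvesImplicitAdvection α lam U)
    (η : ℝ → ℝ) (hη : ConvexOn ℝ Set.univ η) :
    ∀ (n : ℕ) (j : ℤ),
      η (U (n + 1) j)
        ≤ (∑ k ∈ Finset.range (n + 1), caputoCoeff α n k / (1 + lam) * η (U k j))
          + lam / (1 + lam) * η (U (n + 1) (j - 1)) := by
  have hlam0 : 0 < lam := by
    rw [hlam]
    have hΓ : 0 < Real.Gamma (2 - α) := Real.Gamma_pos_of_pos (by linarith [hα.2])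
    have : (0:ℝ) < τ ^ α := Real.rpow_pos_of_pos hτ α
    positivity
  have h1l : (0:ℝ) < 1 + lam := by linarith
  intro n j
  -- weights and points on range (n+2)
  set w : ℕ → ℝ := fun k => if k = n + 1 then lam / (1 + lam) else caputoCoeff α n k / (1 + lam)
    with hw
  set p : ℕ → ℝ := fun k => if k = n + 1 then U (n + 1) (j - 1) else U k j with hp
  have hsplit : ∀ (f : ℕ → ℝ),
      ∑ k ∈ Finset.range (n + 2), (if k = n + 1 then lam / (1 + lam) else
        caputoCoeff α n k / (1 + lam)) * f k
      = (∑ k ∈ Finset.range (n + 1), caputoCoeff α n k / (1 + lam) * f k)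
        + lam / (1 + lam) * f (n + 1) := by
    intro f
    rw [Finset.sum_range_succ, if_pos rfl]
    congr 1
    apply Finset.sum_congr rfl
    intro k hk
    rw [Finset.mem_range] at hk
    rw [if_neg (by omega : k ≠ n + 1)]
  have hw0 : ∀ k ∈ Finset.range (n + 2), 0 ≤ w k := by
    intro k hk
    rw [Finset.mem_range] at hk
    simp only [hw]
    split_ifs with hcase
    · positivity
    · have hkn : k ≤ n := by omega
      have := caputoCoeff_pos hα hkn
      positivity
  have hw1 : ∑ k ∈ Finset.range (n + 2), w k = 1 := by
    have h := hsplit (fun _ => 1)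
    simp only [mul_one] at h
    simp only [hw]
    rw [h, ← Finset.sum_div, caputoCoeff_sum hα n]
    field_simp
  have hcomb : U (n + 1) j = ∑ k ∈ Finset.range (n + 2), w k • p k := by
    have hsch := hU n j
    have hS := hsplit (fun k => p k)
    simp only [smul_eq_mul, hw]
    rw [hS]
    simp only [hp, if_pos rfl]
    have hps : ∑ k ∈ Finset.range (n + 1), caputoCoeff α n k / (1 + lam) *
        (if k = n + 1 then U (n + 1) (j - 1) else U k j)
        = ∑ k ∈ Finset.range (n + 1), caputoCoeff α n k / (1 + lam) * U k j := by
      apply Finset.sum_congr rfl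
      intro k hk
      rw [if_neg (by simp only [Finset.mem_range] at hk; omega : k ≠ n + 1)]
    have hsum : ∑ k ∈ Finset.range (n + 1), caputoCoeff α n k / (1 + lam) * U k j
        = (∑ k ∈ Finset.range (n + 1), caputoCoeff α n k * U k j) / (1 + lam) := by
      rw [Finset.sum_div]
      apply Finset.sum_congr rfl
      intro k _
      ring
    rw [hps, hsum]
    field_simp
    linarith [hsch]
  have hjensen := hη.map_sum_le hw0 hw1 (fun i _ => Set.mem_univ (p i))
  rw [← hcomb] at hjensen
  have hR : ∑ k ∈ Finset.range (n + 2), w k • η (p k)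
      = (∑ k ∈ Finset.range (n + 1), caputoCoeff α n k / (1 + lam) * η (U k j))
        + lam / (1 + lam) * η (U (n + 1) (j - 1)) := by
    simp only [smul_eq_mul, hw]
    have h := hsplit (fun k => η (p k))
    rw [h]
    simp only [hp, if_pos rfl]
    congr 1
    apply Finset.sum_congr rfl
    intro k hk
    rw [if_neg (by simp only [Finset.mem_range] at hk; omega : k ≠ n + 1)]
  rw [hR] at hjensen
  exact hjensen
end
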